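/- For each natural number N ≥ 1 and each d ≥ 1, there is a constant C > 0 such that for all t with 0 < t < 1, the N-th derivative of the function t ↦ (sinh(2t))^{−d/2} is bounded in absolute value by C · t^{−d/2 − N}. -/

import Mathlib

open Real Polynomial

noncomputable def sinhQ (p : ℝ) : ℕ → Polynomial ℝ
  | 0 => 1
  | (n + 1) => Polynomial.C 2 * (Polynomial.X ^ 2 - 1) * (sinhQ p n).derivative
      + Polynomial.C (2 * (p - n)) * Polynomial.X * sinhQ p n

lemma sinhQ_key (p : ℝ) (N : ℕ) : ∀ t : ℝ, 0 < t →
    iteratedDeriv N (fun s : ℝ => Real.sinh (2 * s) ^ p) t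
      = (sinhQ p N).eval (Real.cosh (2 * t)) * Real.sinh (2 * t) ^ (p - N) := by
  induction N with
  | zero => intro t ht; simp [sinhQ]
  | succ n ih =>
    intro t ht
    rw [iteratedDeriv_succ]
    have hev : iteratedDeriv n (fun s : ℝ => Real.sinh (2 * s) ^ p)
        =ᶠ[nhds t] fun s => (sinhQ p n).eval (Real.cosh (2 * s)) * Real.sinh (2 * s) ^ (p - n) := by
      filter_upwards [eventually_gt_nhds ht] with s hs using ih s hs
    rw [hev.deriv_eq]
    have hsinh : 0 < Real.sinh (2 * t) := Real.sinh_pos_iff.2 (by linarith)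
    have h2s : HasDerivAt (fun s : ℝ => 2 * s) 2 t := by
      simpa using (hasDerivAt_id t).const_mul (2 : ℝ)
    have h1 : HasDerivAt (fun s : ℝ => Real.sinh (2 * s)) (Real.cosh (2 * t) * 2) t :=
      (Real.hasDerivAt_sinh (2 * t)).comp t h2s
    have h2 : HasDerivAt (fun s : ℝ => Real.cosh (2 * s)) (Real.sinh (2 * t) * 2) t :=
      (Real.hasDerivAt_cosh (2 * t)).comp t h2s
    have hQ : HasDerivAt (fun s : ℝ => (sinhQ p n).eval (Real.cosh (2 * s)))
        ((sinhQ p n).derivative.eval (Real.cosh (2 * t)) * (Real.sinh (2 * t) * 2)) t :=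
      by have := ((sinhQ p n).hasDerivAt (Real.cosh (2 * t))).comp t h2; exact this
    have hrpow : HasDerivAt (fun s : ℝ => Real.sinh (2 * s) ^ (p - n))
        ((p - n) * Real.sinh (2 * t) ^ (p - n - 1) * (Real.cosh (2 * t) * 2)) t :=
      by have := (Real.hasDerivAt_rpow_const (p := p - n) (Or.inl hsinh.ne')).comp t h1; exact this
    rw [deriv_fun_mul hQ.differentiableAt hrpow.differentiableAt, hQ.deriv, hrpow.deriv]
    set c := Real.cosh (2 * t) with hc
    set s := Real.sinh (2 * t) with hs
    have hcs : c ^ 2 = s ^ 2 + 1 := Real.cosh_sq (2 * t)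
    have e1 : s ^ (p - n) = s * s ^ (p - n - 1) := by
      rw [show s * s ^ (p - (n:ℝ) - 1) = s ^ (1:ℝ) * s ^ (p - n - 1) by rw [Real.rpow_one],
        ← Real.rpow_add hsinh]
      ring_nf
    have e2 : p - ((n : ℝ) + 1) = p - n - 1 := by ring
    simp only [sinhQ, Polynomial.eval_add, Polynomial.eval_mul, Polynomial.eval_C,
      Polynomial.eval_X, Polynomial.eval_pow, Polynomial.eval_sub, Polynomial.eval_one,
      Nat.cast_add, Nat.cast_one, e2, e1]
    linear_combination (-(2 : ℝ) * (sinhQ p n).derivative.eval c * s ^ (p - (n:ℝ) - 1)) * hcs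

theorem iteratedDeriv_sinh_rpow_bound (N d : ℕ) (hN : 1 ≤ N) (hd : 1 ≤ d) :
    ∃ C > 0, ∀ t : ℝ, 0 < t → t < 1 →
      |iteratedDeriv N (fun s : ℝ => Real.sinh (2 * s) ^ (-(d : ℝ) / 2)) t| ≤
        C * t ^ (-(d : ℝ) / 2 - N) := by
  set p : ℝ := -(d : ℝ) / 2 with hp
  obtain ⟨M, hM⟩ := (isCompact_Icc (a := (1:ℝ)) (b := Real.cosh 2)).exists_bound_of_continuousOn
    (f := fun x => (sinhQ p N).eval x) ((sinhQ p N).continuous.continuousOn)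
  have hM0 : 0 ≤ M := le_trans (norm_nonneg _)
    (hM 1 ⟨le_refl _, Real.one_le_cosh 2⟩)
  refine ⟨M + 1, by linarith, fun t ht ht1 => ?_⟩
  rw [sinhQ_key p N t ht]
  have hsinh : 0 < Real.sinh (2 * t) := Real.sinh_pos_iff.2 (by linarith)
  have hco : Real.cosh (2 * t) ∈ Set.Icc (1:ℝ) (Real.cosh 2) := by
    constructor
    · exact Real.one_le_cosh _
    · rw [Real.cosh_le_cosh]
      rw [abs_of_pos (by linarith), abs_of_pos (by norm_num)]
      linarith
  have hb1 : |(sinhQ p N).eval (Real.cosh (2 * t))| ≤ M := hM _ hco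
  have hts : t ≤ Real.sinh (2 * t) := by
    have := Real.self_lt_sinh_iff.2 (show (0:ℝ) < 2 * t by linarith)
    linarith
  have hexp : p - (N : ℝ) ≤ 0 := by
    have : (0:ℝ) < d := by exact_mod_cast hd
    have hN' : (0:ℝ) ≤ N := Nat.cast_nonneg N
    rw [hp]; nlinarith
  have hb2 : Real.sinh (2 * t) ^ (p - (N:ℝ)) ≤ t ^ (p - (N:ℝ)) :=
    Real.rpow_le_rpow_of_nonpos ht hts hexp
  have hpos : 0 < t ^ (p - (N:ℝ)) := Real.rpow_pos_of_pos ht _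
  calc |(sinhQ p N).eval (Real.cosh (2 * t)) * Real.sinh (2 * t) ^ (p - (N:ℝ))|
      = |(sinhQ p N).eval (Real.cosh (2 * t))| * Real.sinh (2 * t) ^ (p - (N:ℝ)) := by
        rw [abs_mul, abs_of_pos (Real.rpow_pos_of_pos hsinh _)]
    _ ≤ M * t ^ (p - (N:ℝ)) := by
        apply mul_le_mul hb1 hb2 (le_of_lt (Real.rpow_pos_of_pos hsinh _)) hM0
    _ ≤ (M + 1) * t ^ (p - (N:ℝ)) := by nlinarith
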